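/- (Decision tree van den Berg–Kesten inequality.) Let G=(V,E) be a finite simple graph, let μ be the Bernoulli bond-percolation product measure on Ω={0,1}^E, and let (C₁,C₂) be sampled from μ×μ. Let T be any decision tree for pairs of configurations building the edge set S(C₁,C₂). Then for any closed-upward events A,B⊆Ω, P((C₁,C₂)∈A □_S B) ≤ μ(A)·μ(B). -/
import Mathlib


namespace DTPerc

variable {E : Type*} [Fintype E] [DecidableEq E]

/-- Bernoulli product weight of a configuration. -/
noncomputable def wt (p : E → ℝ) (C : E → Bool) : ℝ :=
  ∏ e, if C e then p e else 1 - p e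

/-- Probability of an event under the Bernoulli product measure. -/
noncomputable def Pr (p : E → ℝ) (A : Set (E → Bool)) : ℝ :=
  ∑ C : E → Bool, A.indicator (wt p) C

/-- Probability of an event for an independent pair `(C₁, C₂) ~ μ × μ`. -/
noncomputable def Pr2 (p : E → ℝ) (A : Set ((E → Bool) × (E → Bool))) : ℝ :=
  ∑ x : (E → Bool) × (E → Bool), A.indicator (fun y => wt p y.1 * wt p y.2) x

/-- A decision tree for pairs of configurations: every decision node queries an edge,
decides whether it goes to `S` (`toS = true`) or to `S̄`, and has four children indexed
by the pair of revealed values of the edge in the two configurations. -/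
inductive PairTree (E : Type u) : Type u
  | leaf : PairTree E
  | node (e : E) (toS : Bool) (child : Bool → Bool → PairTree E) : PairTree E

/-- The edges queried along any root-to-leaf path are pairwise distinct
(`used` is the set of edges already queried above the current node). -/
def PairTree.valid : PairTree E → Finset E → Prop
  | .leaf, _ => True
  | .node e _ child, used =>
      e ∉ used ∧ ∀ b₁ b₂ : Bool, (child b₁ b₂).valid (insert e used)

/-- The set `S(C₁, C₂)` built by the decision tree. -/
def PairTree.buildS : PairTree E → (E → Bool) → (E → Bool) → Finset E
  | .leaf, _, _ => ∅
  | .node e toS child, C₁, C₂ =>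
      let rest := (child (C₁ e) (C₂ e)).buildS C₁ C₂
      if toS then insert e rest else rest

/-- `C₁ →_S C₂`: the configuration equal to `C₁` on `S` and to `C₂` off `S`. -/
def splice (S : Finset E) (C₁ C₂ : E → Bool) : E → Bool :=
  fun e => if e ∈ S then C₁ e else C₂ e

/-- An event is closed upward if it is preserved by opening more edges. -/
def UpwardClosed (A : Set (E → Bool)) : Prop :=
  ∀ C₁ C₂ : E → Bool, C₁ ∈ A → (∀ e, C₁ e = true → C₂ e = true) → C₂ ∈ A

/-- `I` is a witness of the event `A` in the configuration `C`: every configuration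
agreeing with `C` on `I` belongs to `A`. -/
def Witness (A : Set (E → Bool)) (C : E → Bool) (I : Finset E) : Prop :=
  ∀ C' : E → Bool, (∀ e ∈ I, C' e = C e) → C' ∈ A

/-- The disjoint occurrence `A □_S B` relative to the set `S(C₁,C₂)` built by the
decision tree `T`. -/
def BoxS (T : PairTree E) (A B : Set (E → Bool)) : Set ((E → Bool) × (E → Bool)) :=
  {x | ∃ I J : Finset E,
        Witness A x.1 I ∧
        Witness B (splice (T.buildS x.1 x.2) x.1 x.2) J ∧
        ∀ e ∈ I ∩ J, e ∉ T.buildS x.1 x.2}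
set_option linter.unusedSectionVars false
open Finset Function

/-- weight factor of a single edge value -/
noncomputable def wf (p : E → ℝ) (e : E) (b : Bool) : ℝ := if b then p e else 1 - p e

lemma wf_nonneg {p : E → ℝ} (hp : ∀ e, 0 ≤ p e ∧ p e ≤ 1) (e : E) (b : Bool) :
    0 ≤ wf p e b := by
  cases b <;> simp only [wf, if_pos, if_neg, Bool.false_eq_true, ite_true, ite_false]
  · linarith [(hp e).2]
  · exact (hp e).1

lemma wf_add (p : E → ℝ) (e : E) (b : Bool) : wf p e b + wf p e (!b) = 1 := by
  cases b <;> simp [wf]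

lemma wt_nonneg {p : E → ℝ} (hp : ∀ e, 0 ≤ p e ∧ p e ≤ 1) (C : E → Bool) :
    0 ≤ wt p C := by
  refine Finset.prod_nonneg fun e _ => ?_
  rcases hp e with ⟨h1, h2⟩
  by_cases h : C e <;> simp [h] <;> linarith

/-- product of weight factors over all edges except `e` -/
noncomputable def rho (p : E → ℝ) (e : E) (C : E → Bool) : ℝ :=
  ∏ f ∈ Finset.univ.erase e, if C f then p f else 1 - p f

lemma rho_update (p : E → ℝ) (e : E) (C : E → Bool) (b : Bool) :
    rho p e (Function.update C e b) = rho p e C := by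
  refine Finset.prod_congr rfl fun f hf => ?_
  rw [Function.update_of_ne (Finset.mem_erase.1 hf).1]

lemma wt_eq_wf (p : E → ℝ) (C : E → Bool) (e : E) :
    wt p C = wf p e (C e) * rho p e C := by
  rw [wt, ← Finset.mul_prod_erase _ _ (Finset.mem_univ e)]
  rfl

lemma wt_update (p : E → ℝ) (C : E → Bool) (e : E) (b : Bool) :
    wt p (Function.update C e b) = wf p e b * rho p e C := by
  rw [wt_eq_wf p _ e, Function.update_self, rho_update]

/-- flip the value of a configuration at `e` -/
def flipAt (e : E) (C : E → Bool) : E → Bool := Function.update C e (!C e)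

lemma flipAt_involutive (e : E) : Function.Involutive (flipAt e) := by
  intro C
  simp only [flipAt, Function.update_self, Function.update_idem, Bool.not_not,
    Function.update_eq_self]

lemma flipAt_bijective (e : E) : Function.Bijective (flipAt e) :=
  (flipAt_involutive e).bijective

lemma key (p : E → ℝ) (e : E) (b : Bool) (g : (E → Bool) → ℝ) :
    ∑ C : E → Bool, wt p C * (if C e = b then g C else 0)
      = wf p e b * ∑ C : E → Bool, wt p C * g (Function.update C e b) := by
  classical
  have e1 : ∀ C : E → Bool, wf p e b * (wt p C * g (Function.update C e b))
      = (if C e = b then wf p e b * wf p e b * rho p e C * g C else 0)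
        + (if C e = b then 0
           else wf p e b * wf p e (!b) * rho p e C * g (Function.update C e b)) := by
    intro C
    rw [wt_eq_wf p C e]
    by_cases h : C e = b
    · subst h
      rw [if_pos rfl, if_pos rfl, Function.update_eq_self]
      ring
    · have h' : C e = !b := by cases b <;> cases hce : C e <;> simp_all
      rw [if_neg h, if_neg h, h']
      ring
  have e2 : ∀ C : E → Bool,
      (if (flipAt e C) e = b then (0:ℝ)
       else wf p e b * wf p e (!b) * rho p e (flipAt e C)
              * g (Function.update (flipAt e C) e b))
      = (if C e = b then wf p e b * wf p e (!b) * rho p e C * g C else 0) := by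
    intro C
    have h1 : flipAt e C e = !C e := Function.update_self _ _ _
    have h2 : rho p e (flipAt e C) = rho p e C := rho_update p e C _
    have h3 : Function.update (flipAt e C) e b = Function.update C e b := by
      simp [flipAt, Function.update_idem]
    rw [h1, h2, h3]
    by_cases h : C e = b
    · subst h
      have hne : ¬ ((!C e) = C e) := by cases C e <;> simp
      rw [if_neg hne, if_pos rfl, Function.update_eq_self]
    · have h' : (!C e) = b := by cases b <;> cases hce : C e <;> simp_all
      rw [if_pos h', if_neg h]
  have e3 : ∀ C : E → Bool,
      (if C e = b then wf p e b * wf p e b * rho p e C * g C else 0)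
      + (if C e = b then wf p e b * wf p e (!b) * rho p e C * g C else 0)
      = wt p C * (if C e = b then g C else 0) := by
    intro C
    rw [wt_eq_wf p C e]
    by_cases h : C e = b
    · rw [if_pos h, if_pos h, if_pos h, h]
      have hw := wf_add p e b
      linear_combination (wf p e b * rho p e C * g C) * hw
    · rw [if_neg h, if_neg h, if_neg h]
      ring
  have hflip : ∑ C : E → Bool,
      (if (flipAt e C) e = b then (0:ℝ)
       else wf p e b * wf p e (!b) * rho p e (flipAt e C)
              * g (Function.update (flipAt e C) e b))
      = ∑ C : E → Bool,
      (if C e = b then (0:ℝ)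
       else wf p e b * wf p e (!b) * rho p e C * g (Function.update C e b)) :=
    Fintype.sum_bijective (flipAt e) (flipAt_bijective e) _ _ (fun C => rfl)
  calc ∑ C : E → Bool, wt p C * (if C e = b then g C else 0)
      = ∑ C : E → Bool,
          ((if C e = b then wf p e b * wf p e b * rho p e C * g C else 0)
           + (if C e = b then wf p e b * wf p e (!b) * rho p e C * g C else 0)) := by
        exact Finset.sum_congr rfl fun C _ => (e3 C).symm
    _ = ∑ C : E → Bool, (if C e = b then wf p e b * wf p e b * rho p e C * g C else 0)
        + ∑ C : E → Bool, (if C e = b then wf p e b * wf p e (!b) * rho p e C * g C else 0) :=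
        Finset.sum_add_distrib
    _ = ∑ C : E → Bool, (if C e = b then wf p e b * wf p e b * rho p e C * g C else 0)
        + ∑ C : E → Bool, (if C e = b then (0:ℝ)
            else wf p e b * wf p e (!b) * rho p e C * g (Function.update C e b)) := by
        rw [← hflip]
        congr 1
        exact (Finset.sum_congr rfl fun C _ => (e2 C)).symm
    _ = ∑ C : E → Bool,
          ((if C e = b then wf p e b * wf p e b * rho p e C * g C else 0)
           + (if C e = b then (0:ℝ)
              else wf p e b * wf p e (!b) * rho p e C * g (Function.update C e b))) :=
        Finset.sum_add_distrib.symm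
    _ = ∑ C : E → Bool, wf p e b * (wt p C * g (Function.update C e b)) :=
        Finset.sum_congr rfl fun C _ => (e1 C).symm
    _ = wf p e b * ∑ C : E → Bool, wt p C * g (Function.update C e b) :=
        (Finset.mul_sum _ _ _).symm

-- batch 2 : Pr2 lemmas
open scoped Classical

lemma key' (p : E → ℝ) (e : E) (g : (E → Bool) → ℝ) :
    ∑ C : E → Bool, wt p C * g C
      = ∑ b : Bool, wf p e b * ∑ C : E → Bool, wt p C * g (Function.update C e b) := by
  classical
  have expand : ∀ C : E → Bool, wt p C * g C
      = ∑ b : Bool, wt p C * (if C e = b then g C else 0) := by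
    intro C
    cases hce : C e <;> simp [Fintype.sum_bool, hce]
  rw [Finset.sum_congr rfl fun C _ => expand C, Finset.sum_comm]
  exact Finset.sum_congr rfl fun b _ => key p e b g

def pin (X : Set ((E → Bool) × (E → Bool))) (e : E) (b₁ b₂ : Bool) :
    Set ((E → Bool) × (E → Bool)) :=
  {x | (Function.update x.1 e b₁, Function.update x.2 e b₂) ∈ X}

noncomputable def ind (X : Set ((E → Bool) × (E → Bool))) (C₁ C₂ : E → Bool) : ℝ :=
  if (C₁, C₂) ∈ X then 1 else 0

lemma Pr2_eq (p : E → ℝ) (X : Set ((E → Bool) × (E → Bool))) :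
    Pr2 p X = ∑ C₁ : E → Bool, wt p C₁ *
        ∑ C₂ : E → Bool, wt p C₂ * ind X C₁ C₂ := by
  classical
  rw [Pr2, Fintype.sum_prod_type]
  refine Finset.sum_congr rfl fun C₁ _ => ?_
  rw [Finset.mul_sum]
  refine Finset.sum_congr rfl fun C₂ _ => ?_
  by_cases h : (C₁, C₂) ∈ X <;> simp [Set.indicator_apply, h, ind]

lemma Pr2_pin (p : E → ℝ) (e : E) (X : Set ((E → Bool) × (E → Bool))) :
    Pr2 p X = ∑ b₁ : Bool, ∑ b₂ : Bool,
      wf p e b₁ * wf p e b₂ * Pr2 p (pin X e b₁ b₂) := by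
  rw [Pr2_eq, key' p e (fun C₁ => ∑ C₂ : E → Bool, wt p C₂ * ind X C₁ C₂)]
  refine Finset.sum_congr rfl fun b₁ _ => ?_
  have h1 : ∀ C₁ : E → Bool,
      (∑ C₂ : E → Bool, wt p C₂ * ind X (Function.update C₁ e b₁) C₂)
      = ∑ b₂ : Bool, wf p e b₂ * ∑ C₂ : E → Bool,
          wt p C₂ * ind X (Function.update C₁ e b₁) (Function.update C₂ e b₂) :=
    fun C₁ => key' p e _
  rw [Finset.sum_congr rfl fun C₁ _ => by rw [h1 C₁], Finset.mul_sum]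
  have h2 : ∀ C₁ : E → Bool, wf p e b₁ * (wt p C₁ * ∑ b₂ : Bool, wf p e b₂ *
        ∑ C₂ : E → Bool, wt p C₂ * ind X (Function.update C₁ e b₁) (Function.update C₂ e b₂))
      = ∑ b₂ : Bool, wf p e b₁ * wf p e b₂ * (wt p C₁ *
        ∑ C₂ : E → Bool, wt p C₂ * ind X (Function.update C₁ e b₁) (Function.update C₂ e b₂)) := by
    intro C₁
    rw [Finset.mul_sum, Finset.mul_sum]
    exact Finset.sum_congr rfl fun b₂ _ => by ring
  rw [Finset.sum_congr rfl fun C₁ _ => h2 C₁, Finset.sum_comm]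
  refine Finset.sum_congr rfl fun b₂ _ => ?_
  rw [Pr2_eq p (pin X e b₁ b₂), Finset.mul_sum]
  exact Finset.sum_congr rfl fun C₁ _ => rfl

lemma Pr2_nonneg {p : E → ℝ} (hp : ∀ e, 0 ≤ p e ∧ p e ≤ 1)
    (X : Set ((E → Bool) × (E → Bool))) : 0 ≤ Pr2 p X := by
  refine Finset.sum_nonneg fun x _ => Set.indicator_nonneg (fun y _ => ?_) x
  exact mul_nonneg (wt_nonneg hp _) (wt_nonneg hp _)

lemma Pr2_mono {p : E → ℝ} (hp : ∀ e, 0 ≤ p e ∧ p e ≤ 1)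
    {X Y : Set ((E → Bool) × (E → Bool))} (h : X ⊆ Y) : Pr2 p X ≤ Pr2 p Y := by
  classical
  refine Finset.sum_le_sum fun x _ => ?_
  exact Set.indicator_le_indicator_of_subset h
    (fun y => mul_nonneg (wt_nonneg hp _) (wt_nonneg hp _)) x

lemma Pr2_union_inter (p : E → ℝ) (X Y : Set ((E → Bool) × (E → Bool))) :
    Pr2 p (X ∪ Y) + Pr2 p (X ∩ Y) = Pr2 p X + Pr2 p Y := by
  classical
  rw [Pr2, Pr2, Pr2, Pr2, ← Finset.sum_add_distrib, ← Finset.sum_add_distrib]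
  refine Finset.sum_congr rfl fun x _ => ?_
  by_cases hx : x ∈ X <;> by_cases hy : x ∈ Y <;>
    simp [Set.indicator_apply, hx, hy]

lemma Pr_eq (p : E → ℝ) (A : Set (E → Bool)) :
    Pr p A = ∑ C : E → Bool, wt p C * (if C ∈ A then (1:ℝ) else 0) := by
  classical
  rw [Pr]
  refine Finset.sum_congr rfl fun C _ => ?_
  by_cases h : C ∈ A <;> simp [Set.indicator_apply, h]

lemma Pr2_prod (p : E → ℝ) (A B : Set (E → Bool)) :
    Pr2 p (A ×ˢ B) = Pr p A * Pr p B := by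
  classical
  rw [Pr2_eq, Pr_eq, Pr_eq, Finset.sum_mul_sum]
  refine Finset.sum_congr rfl fun C₁ _ => ?_
  rw [Finset.mul_sum]
  refine Finset.sum_congr rfl fun C₂ _ => ?_
  by_cases h1 : C₁ ∈ A <;> by_cases h2 : C₂ ∈ B <;>
    simp [ind, Set.mem_prod, h1, h2] <;> ring
-- batch 3 : set-theoretic lemmas
lemma witness_mono {A A' : Set (E → Bool)} (h : A ⊆ A') {C : E → Bool} {I : Finset E} :
    Witness A C I → Witness A' C I := fun hw C' hC' => h (hw C' hC')

lemma exists_witness_iff {A : Set (E → Bool)} {C : E → Bool} :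
    (∃ I, Witness A C I) ↔ C ∈ A := by
  constructor
  · rintro ⟨I, hI⟩
    exact hI C fun _ _ => rfl
  · intro hC
    refine ⟨Finset.univ, fun C' h => ?_⟩
    have : C' = C := funext fun f => h f (Finset.mem_univ f)
    rwa [this]

/-- the section of an event obtained by fixing the value at `e` to `b` -/
def sec (A : Set (E → Bool)) (e : E) (b : Bool) : Set (E → Bool) :=
  {C | Function.update C e b ∈ A}

lemma sec_upward {A : Set (E → Bool)} (hA : UpwardClosed A) (e : E) (b : Bool) :
    UpwardClosed (sec A e b) := by
  intro C₁ C₂ h₁ hle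
  refine hA _ _ h₁ fun f hf => ?_
  rcases eq_or_ne f e with rfl | hne
  · rwa [Function.update_self] at hf ⊢
  · rw [Function.update_of_ne hne] at hf ⊢
    exact hle f hf

lemma sec_false_subset {A : Set (E → Bool)} (hA : UpwardClosed A) (e : E) (b : Bool) :
    sec A e false ⊆ sec A e b := by
  intro C hC
  refine hA _ _ hC fun f hf => ?_
  rcases eq_or_ne f e with rfl | hne
  · rw [Function.update_self] at hf
    exact absurd hf (by simp)
  · rwa [Function.update_of_ne hne] at hf ⊢

lemma mem_of_sec_false {A : Set (E → Bool)} (hA : UpwardClosed A) {e : E} {C : E → Bool}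
    (h : C ∈ sec A e false) : C ∈ A := by
  refine hA _ _ h fun f hf => ?_
  rcases eq_or_ne f e with rfl | hne
  · rw [Function.update_self] at hf
    exact absurd hf (by simp)
  · rwa [Function.update_of_ne hne] at hf

lemma witness_sec_erase {A : Set (E → Bool)} {e : E} {b : Bool} {C : E → Bool} {I : Finset E}
    (h : Witness (sec A e b) C I) : Witness (sec A e b) C (I.erase e) := by
  intro C' hC'
  have h2 : Function.update C' e (C e) ∈ sec A e b := by
    refine h _ fun f hf => ?_
    rcases eq_or_ne f e with rfl | hne
    · rw [Function.update_self]
    · rw [Function.update_of_ne hne]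
      exact hC' f (Finset.mem_erase.2 ⟨hne, hf⟩)
  have : Function.update (Function.update C' e (C e)) e b = Function.update C' e b :=
    Function.update_idem _ _ _
  rw [sec, Set.mem_setOf_eq, this] at h2
  exact h2

lemma buildS_notMem (T : PairTree E) :
    ∀ (U : Finset E), T.valid U → ∀ (C₁ C₂ : E → Bool) (f : E),
      f ∈ T.buildS C₁ C₂ → f ∉ U := by
  induction T with
  | leaf =>
    intro U _ C₁ C₂ f hf
    simp [PairTree.buildS] at hf
  | node e toS child ih =>
    intro U hU C₁ C₂ f hf hfU
    obtain ⟨he, hch⟩ := hU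
    simp only [PairTree.buildS] at hf
    by_cases ht : toS
    · rw [if_pos ht] at hf
      rcases Finset.mem_insert.1 hf with rfl | hf'
      · exact he hfU
      · exact ih _ _ _ (hch _ _) C₁ C₂ f hf' (Finset.mem_insert_of_mem hfU)
    · rw [if_neg ht] at hf
      exact ih _ _ _ (hch _ _) C₁ C₂ f hf (Finset.mem_insert_of_mem hfU)

lemma buildS_congr (T : PairTree E) :
    ∀ (U : Finset E), T.valid U → ∀ (C₁ C₂ C₁' C₂' : E → Bool),
      (∀ f, f ∉ U → C₁ f = C₁' f) → (∀ f, f ∉ U → C₂ f = C₂' f) →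
      T.buildS C₁ C₂ = T.buildS C₁' C₂' := by
  induction T with
  | leaf => intro U _ C₁ C₂ C₁' C₂' _ _; rfl
  | node e toS child ih =>
    intro U hU C₁ C₂ C₁' C₂' h1 h2
    obtain ⟨he, hch⟩ := hU
    have he1 : C₁ e = C₁' e := h1 e he
    have he2 : C₂ e = C₂' e := h2 e he
    simp only [PairTree.buildS]
    have hrest : (child (C₁ e) (C₂ e)).buildS C₁ C₂
        = (child (C₁' e) (C₂' e)).buildS C₁' C₂' := by
      rw [← he1, ← he2]
      exact ih _ _ _ (hch _ _) _ _ _ _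
        (fun f hf => h1 f (fun hfU => hf (Finset.mem_insert_of_mem hfU)))
        (fun f hf => h2 f (fun hfU => hf (Finset.mem_insert_of_mem hfU)))
    rw [hrest]
-- batch 4 : BoxS structure lemmas
lemma mem_BoxS {T : PairTree E} {A B : Set (E → Bool)} {C₁ C₂ : E → Bool} :
    (C₁, C₂) ∈ BoxS T A B ↔ ∃ I J : Finset E, Witness A C₁ I ∧
      Witness B (splice (T.buildS C₁ C₂) C₁ C₂) J ∧
      ∀ f ∈ I ∩ J, f ∉ T.buildS C₁ C₂ := Iff.rfl

lemma mem_pin {X : Set ((E → Bool) × (E → Bool))} {e : E} {b₁ b₂ : Bool} {C₁ C₂ : E → Bool} :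
    (C₁, C₂) ∈ pin X e b₁ b₂ ↔
      (Function.update C₁ e b₁, Function.update C₂ e b₂) ∈ X := Iff.rfl

lemma BoxS_leaf (A B : Set (E → Bool)) :
    BoxS (PairTree.leaf : PairTree E) A B = A ×ˢ B := by
  ext x
  obtain ⟨C₁, C₂⟩ := x
  have hbuild : (PairTree.leaf : PairTree E).buildS C₁ C₂ = ∅ := rfl
  have hsp : splice (∅ : Finset E) C₁ C₂ = C₂ := funext fun f => by simp [splice]
  rw [mem_BoxS]
  simp only [hbuild, hsp, Set.mem_prod]
  constructor
  · rintro ⟨I, J, hI, hJ, -⟩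
    exact ⟨exists_witness_iff.1 ⟨I, hI⟩, exists_witness_iff.1 ⟨J, hJ⟩⟩
  · rintro ⟨h1, h2⟩
    obtain ⟨I, hI⟩ := exists_witness_iff.2 h1
    obtain ⟨J, hJ⟩ := exists_witness_iff.2 h2
    exact ⟨I, J, hI, hJ, fun f _ => Finset.notMem_empty f⟩

section NodePin

variable {e : E} {child : Bool → Bool → PairTree E} {U : Finset E}
variable {A B : Set (E → Bool)} {b₁ b₂ : Bool} {C₁ C₂ : E → Bool}

lemma update_agree (C : E → Bool) (b : Bool) :
    ∀ f, f ∉ insert e U → Function.update C e b f = C f := by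
  intro f hf
  have hne : f ≠ e := fun h => hf (by rw [h]; exact Finset.mem_insert_self e U)
  exact Function.update_of_ne hne _ _

lemma child_buildS_pin (hch : ∀ b₁' b₂', (child b₁' b₂').valid (insert e U)) :
    (child b₁ b₂).buildS (Function.update C₁ e b₁) (Function.update C₂ e b₂)
      = (child b₁ b₂).buildS C₁ C₂ :=
  buildS_congr _ _ (hch b₁ b₂) _ _ _ _ (update_agree C₁ b₁) (update_agree C₂ b₂)

lemma e_notMem_child_buildS (hch : ∀ b₁' b₂', (child b₁' b₂').valid (insert e U)) :
    e ∉ (child b₁ b₂).buildS C₁ C₂ := fun h =>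
  buildS_notMem _ _ (hch b₁ b₂) C₁ C₂ e h (Finset.mem_insert_self e U)

lemma splice_pin_false (hch : ∀ b₁' b₂', (child b₁' b₂').valid (insert e U)) :
    splice ((child b₁ b₂).buildS C₁ C₂) (Function.update C₁ e b₁) (Function.update C₂ e b₂)
      = Function.update (splice ((child b₁ b₂).buildS C₁ C₂) C₁ C₂) e b₂ := by
  funext f
  rcases eq_or_ne f e with rfl | hne
  · rw [Function.update_self]
    have : splice ((child b₁ b₂).buildS C₁ C₂) (Function.update C₁ f b₁)
        (Function.update C₂ f b₂) f
        = Function.update C₂ f b₂ f := by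
      simp [splice, e_notMem_child_buildS (U := U) hch]
    rw [this, Function.update_self]
  · by_cases hf : f ∈ (child b₁ b₂).buildS C₁ C₂ <;>
      simp [splice, hf, Function.update_of_ne hne]

lemma splice_pin_true (hch : ∀ b₁' b₂', (child b₁' b₂').valid (insert e U)) :
    splice (insert e ((child b₁ b₂).buildS C₁ C₂))
        (Function.update C₁ e b₁) (Function.update C₂ e b₂)
      = Function.update (splice ((child b₁ b₂).buildS C₁ C₂) C₁ C₂) e b₁ := by
  funext f
  rcases eq_or_ne f e with rfl | hne
  · have : splice (insert f ((child b₁ b₂).buildS C₁ C₂)) (Function.update C₁ f b₁)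
        (Function.update C₂ f b₂) f = Function.update C₁ f b₁ f := by
      simp [splice]
    rw [this, Function.update_self, Function.update_self]
  · have hmem : (f ∈ insert e ((child b₁ b₂).buildS C₁ C₂))
        ↔ f ∈ (child b₁ b₂).buildS C₁ C₂ := by
      simp [Finset.mem_insert, hne]
    by_cases hf : f ∈ (child b₁ b₂).buildS C₁ C₂ <;>
      simp [splice, hf, hmem, Function.update_of_ne hne]

lemma buildS_node_pin_false (hch : ∀ b₁' b₂', (child b₁' b₂').valid (insert e U)) :
    (PairTree.node e false child).buildS (Function.update C₁ e b₁) (Function.update C₂ e b₂)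
      = (child b₁ b₂).buildS C₁ C₂ := by
  show (let rest := _; if (false : Bool) then insert e rest else rest) = _
  simp only [Bool.false_eq_true, if_false]
  rw [Function.update_self, Function.update_self]
  exact child_buildS_pin hch

lemma buildS_node_pin_true (hch : ∀ b₁' b₂', (child b₁' b₂').valid (insert e U)) :
    (PairTree.node e true child).buildS (Function.update C₁ e b₁) (Function.update C₂ e b₂)
      = insert e ((child b₁ b₂).buildS C₁ C₂) := by
  show (let rest := _; if (true : Bool) then insert e rest else rest) = _
  simp only [if_true]
  rw [Function.update_self, Function.update_self]
  rw [child_buildS_pin hch]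

end NodePin
-- batch 5 : pinning BoxS at a node
section NodeBox

variable {e : E} {child : Bool → Bool → PairTree E} {U : Finset E}

lemma pin_BoxS_node_false (hch : ∀ b₁' b₂', (child b₁' b₂').valid (insert e U))
    (A B : Set (E → Bool)) (b₁ b₂ : Bool) :
    pin (BoxS (PairTree.node e false child) A B) e b₁ b₂
      = BoxS (child b₁ b₂) (sec A e b₁) (sec B e b₂) := by
  ext x
  obtain ⟨C₁, C₂⟩ := x
  rw [mem_pin, mem_BoxS, mem_BoxS]
  simp only [buildS_node_pin_false (U := U) hch, splice_pin_false (U := U) hch]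
  constructor
  · rintro ⟨I, J, hI, hJ, hdisj⟩
    refine ⟨I.erase e, J.erase e, ?_, ?_, ?_⟩
    · intro C' hC'
      show Function.update C' e b₁ ∈ A
      refine hI _ fun f hf => ?_
      rcases eq_or_ne f e with rfl | hne
      · rw [Function.update_self, Function.update_self]
      · rw [Function.update_of_ne hne, Function.update_of_ne hne]
        exact hC' f (Finset.mem_erase.2 ⟨hne, hf⟩)
    · intro C' hC'
      show Function.update C' e b₂ ∈ B
      refine hJ _ fun f hf => ?_
      rcases eq_or_ne f e with rfl | hne
      · rw [Function.update_self, Function.update_self]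
      · rw [Function.update_of_ne hne, Function.update_of_ne hne]
        exact hC' f (Finset.mem_erase.2 ⟨hne, hf⟩)
    · intro f hf
      obtain ⟨hf1, hf2⟩ := Finset.mem_inter.1 hf
      exact hdisj f (Finset.mem_inter.2
        ⟨Finset.mem_of_mem_erase hf1, Finset.mem_of_mem_erase hf2⟩)
  · rintro ⟨I, J, hI, hJ, hdisj⟩
    replace hI := witness_sec_erase hI
    replace hJ := witness_sec_erase hJ
    refine ⟨insert e (I.erase e), insert e (J.erase e), ?_, ?_, ?_⟩
    · intro C' hC'
      have hCe : C' e = b₁ := by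
        have := hC' e (Finset.mem_insert_self e _)
        rwa [Function.update_self] at this
      have hmem : C' ∈ sec A e b₁ := by
        refine hI _ fun f hf => ?_
        have hne : f ≠ e := (Finset.mem_erase.1 hf).1
        have := hC' f (Finset.mem_insert_of_mem hf)
        rwa [Function.update_of_ne hne] at this
      have hupd : Function.update C' e b₁ = C' := by
        rw [← hCe]; exact Function.update_eq_self e C'
      rw [sec, Set.mem_setOf_eq, hupd] at hmem
      exact hmem
    · intro C' hC'
      have hCe : C' e = b₂ := by
        have := hC' e (Finset.mem_insert_self e _)
        rwa [Function.update_self] at this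
      have hmem : C' ∈ sec B e b₂ := by
        refine hJ _ fun f hf => ?_
        have hne : f ≠ e := (Finset.mem_erase.1 hf).1
        have := hC' f (Finset.mem_insert_of_mem hf)
        rwa [Function.update_of_ne hne] at this
      have hupd : Function.update C' e b₂ = C' := by
        rw [← hCe]; exact Function.update_eq_self e C'
      rw [sec, Set.mem_setOf_eq, hupd] at hmem
      exact hmem
    · intro f hf hfS
      have hfe : f ≠ e := fun h => e_notMem_child_buildS (U := U) hch (h ▸ hfS)
      obtain ⟨hf1, hf2⟩ := Finset.mem_inter.1 hf
      have hf1' : f ∈ I := Finset.mem_of_mem_erase ((Finset.mem_insert.1 hf1).resolve_left hfe)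
      have hf2' : f ∈ J := Finset.mem_of_mem_erase ((Finset.mem_insert.1 hf2).resolve_left hfe)
      exact hdisj f (Finset.mem_inter.2 ⟨hf1', hf2'⟩) hfS

lemma pin_BoxS_node_true (hch : ∀ b₁' b₂', (child b₁' b₂').valid (insert e U))
    {A B : Set (E → Bool)} (hA : UpwardClosed A) (hB : UpwardClosed B) (b₁ b₂ : Bool) :
    pin (BoxS (PairTree.node e true child) A B) e b₁ b₂
      = BoxS (child b₁ b₂) (sec A e false) (sec B e b₁)
        ∪ BoxS (child b₁ b₂) (sec A e b₁) (sec B e false) := by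
  ext x
  obtain ⟨C₁, C₂⟩ := x
  rw [mem_pin, mem_BoxS, Set.mem_union, mem_BoxS, mem_BoxS]
  simp only [buildS_node_pin_true (U := U) hch, splice_pin_true (U := U) hch]
  have heS : e ∉ (child b₁ b₂).buildS C₁ C₂ := e_notMem_child_buildS (U := U) hch
  constructor
  · rintro ⟨I, J, hI, hJ, hdisj⟩
    by_cases heI : e ∈ I
    · -- e ∈ I, hence e ∉ J : second box
      have heJ : e ∉ J := by
        intro heJ
        exact hdisj e (Finset.mem_inter.2 ⟨heI, heJ⟩) (Finset.mem_insert_self e _)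
      refine Or.inr ⟨I.erase e, J.erase e, ?_, ?_, ?_⟩
      · intro C' hC'
        show Function.update C' e b₁ ∈ A
        refine hI _ fun f hf => ?_
        rcases eq_or_ne f e with rfl | hne
        · rw [Function.update_self, Function.update_self]
        · rw [Function.update_of_ne hne, Function.update_of_ne hne]
          exact hC' f (Finset.mem_erase.2 ⟨hne, hf⟩)
      · intro C' hC'
        show Function.update C' e false ∈ B
        refine hJ _ fun f hf => ?_
        have hne : f ≠ e := fun h => heJ (h ▸ hf)
        rw [Function.update_of_ne hne, Function.update_of_ne hne]
        exact hC' f (Finset.mem_erase.2 ⟨hne, hf⟩)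
      · intro f hf hfS
        obtain ⟨hf1, hf2⟩ := Finset.mem_inter.1 hf
        exact hdisj f (Finset.mem_inter.2
          ⟨Finset.mem_of_mem_erase hf1, Finset.mem_of_mem_erase hf2⟩)
          (Finset.mem_insert_of_mem hfS)
    · -- e ∉ I : first box
      refine Or.inl ⟨I.erase e, J.erase e, ?_, ?_, ?_⟩
      · intro C' hC'
        show Function.update C' e false ∈ A
        refine hI _ fun f hf => ?_
        have hne : f ≠ e := fun h => heI (h ▸ hf)
        rw [Function.update_of_ne hne, Function.update_of_ne hne]
        exact hC' f (Finset.mem_erase.2 ⟨hne, hf⟩)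
      · intro C' hC'
        show Function.update C' e b₁ ∈ B
        refine hJ _ fun f hf => ?_
        rcases eq_or_ne f e with rfl | hne
        · rw [Function.update_self, Function.update_self]
        · rw [Function.update_of_ne hne, Function.update_of_ne hne]
          exact hC' f (Finset.mem_erase.2 ⟨hne, hf⟩)
      · intro f hf hfS
        obtain ⟨hf1, hf2⟩ := Finset.mem_inter.1 hf
        exact hdisj f (Finset.mem_inter.2
          ⟨Finset.mem_of_mem_erase hf1, Finset.mem_of_mem_erase hf2⟩)
          (Finset.mem_insert_of_mem hfS)
  · rintro (⟨I, J, hI, hJ, hdisj⟩ | ⟨I, J, hI, hJ, hdisj⟩)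
    · -- first box : A-witness avoids e, B-witness uses e := b₁
      replace hI := witness_sec_erase hI
      replace hJ := witness_sec_erase hJ
      refine ⟨I.erase e, insert e (J.erase e), ?_, ?_, ?_⟩
      · intro C' hC'
        have hmem : C' ∈ sec A e false := by
          refine hI _ fun f hf => ?_
          have hne : f ≠ e := (Finset.mem_erase.1 hf).1
          have := hC' f hf
          rwa [Function.update_of_ne hne] at this
        exact mem_of_sec_false hA hmem
      · intro C' hC'
        have hCe : C' e = b₁ := by
          have := hC' e (Finset.mem_insert_self e _)
          rwa [Function.update_self] at this
        have hmem : C' ∈ sec B e b₁ := by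
          refine hJ _ fun f hf => ?_
          have hne : f ≠ e := (Finset.mem_erase.1 hf).1
          have := hC' f (Finset.mem_insert_of_mem hf)
          rwa [Function.update_of_ne hne] at this
        have hupd : Function.update C' e b₁ = C' := by
          rw [← hCe]; exact Function.update_eq_self e C'
        rw [sec, Set.mem_setOf_eq, hupd] at hmem
        exact hmem
      · intro f hf hfS
        obtain ⟨hf1, hf2⟩ := Finset.mem_inter.1 hf
        have hfe : f ≠ e := (Finset.mem_erase.1 hf1).1
        have hfS' : f ∈ (child b₁ b₂).buildS C₁ C₂ :=
          (Finset.mem_insert.1 hfS).resolve_left hfe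
        have hf2' : f ∈ J := Finset.mem_of_mem_erase ((Finset.mem_insert.1 hf2).resolve_left hfe)
        exact hdisj f (Finset.mem_inter.2 ⟨Finset.mem_of_mem_erase hf1, hf2'⟩) hfS'
    · -- second box : A-witness uses e := b₁, B-witness avoids e
      replace hI := witness_sec_erase hI
      replace hJ := witness_sec_erase hJ
      refine ⟨insert e (I.erase e), J.erase e, ?_, ?_, ?_⟩
      · intro C' hC'
        have hCe : C' e = b₁ := by
          have := hC' e (Finset.mem_insert_self e _)
          rwa [Function.update_self] at this
        have hmem : C' ∈ sec A e b₁ := by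
          refine hI _ fun f hf => ?_
          have hne : f ≠ e := (Finset.mem_erase.1 hf).1
          have := hC' f (Finset.mem_insert_of_mem hf)
          rwa [Function.update_of_ne hne] at this
        have hupd : Function.update C' e b₁ = C' := by
          rw [← hCe]; exact Function.update_eq_self e C'
        rw [sec, Set.mem_setOf_eq, hupd] at hmem
        exact hmem
      · intro C' hC'
        have hmem : C' ∈ sec B e false := by
          refine hJ _ fun f hf => ?_
          have hne : f ≠ e := (Finset.mem_erase.1 hf).1
          have := hC' f hf
          rwa [Function.update_of_ne hne] at this
        exact mem_of_sec_false hB hmem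
      · intro f hf hfS
        obtain ⟨hf1, hf2⟩ := Finset.mem_inter.1 hf
        have hfe : f ≠ e := (Finset.mem_erase.1 hf2).1
        have hfS' : f ∈ (child b₁ b₂).buildS C₁ C₂ :=
          (Finset.mem_insert.1 hfS).resolve_left hfe
        have hf1' : f ∈ I := Finset.mem_of_mem_erase ((Finset.mem_insert.1 hf1).resolve_left hfe)
        exact hdisj f (Finset.mem_inter.2 ⟨hf1', Finset.mem_of_mem_erase hf2⟩) hfS'

end NodeBox
-- batch 6 : unions over families, main induction, final theorem
def unionBox (T : PairTree E) (l : List (Set (E → Bool) × Set (E → Bool))) :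
    Set ((E → Bool) × (E → Bool)) :=
  {x | ∃ ab ∈ l, x ∈ BoxS T ab.1 ab.2}

def unionProd (l : List (Set (E → Bool) × Set (E → Bool))) :
    Set ((E → Bool) × (E → Bool)) :=
  {x | ∃ ab ∈ l, x.1 ∈ ab.1 ∧ x.2 ∈ ab.2}

/-- the doubled family used at an `S`-node -/
def dbl (l : List (Set (E → Bool) × Set (E → Bool))) (e : E) (b₁ : Bool) :
    List (Set (E → Bool) × Set (E → Bool)) :=
  l.flatMap fun ab => [(sec ab.1 e false, sec ab.2 e b₁), (sec ab.1 e b₁, sec ab.2 e false)]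

/-- the section family used at an `S̄`-node -/
def secl (l : List (Set (E → Bool) × Set (E → Bool))) (e : E) (b₁ b₂ : Bool) :
    List (Set (E → Bool) × Set (E → Bool)) :=
  l.map fun ab => (sec ab.1 e b₁, sec ab.2 e b₂)

lemma unionBox_leaf (l : List (Set (E → Bool) × Set (E → Bool))) :
    unionBox (PairTree.leaf : PairTree E) l = unionProd l := by
  ext x
  simp only [unionBox, unionProd, Set.mem_setOf_eq, BoxS_leaf, Set.mem_prod]

lemma pin_unionProd (l : List (Set (E → Bool) × Set (E → Bool))) (e : E) (b₁ b₂ : Bool) :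
    pin (unionProd l) e b₁ b₂ = unionProd (secl l e b₁ b₂) := by
  ext x
  simp only [pin, unionProd, secl, Set.mem_setOf_eq, List.mem_map]
  constructor
  · rintro ⟨ab, hab, h1, h2⟩
    exact ⟨(sec ab.1 e b₁, sec ab.2 e b₂), ⟨ab, hab, rfl⟩, h1, h2⟩
  · rintro ⟨ab', ⟨ab, hab, rfl⟩, h1, h2⟩
    exact ⟨ab, hab, h1, h2⟩

lemma mem_unionProd_secl {l : List (Set (E → Bool) × Set (E → Bool))} {e : E}
    {b₁ b₂ : Bool} {x : (E → Bool) × (E → Bool)} :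
    x ∈ unionProd (secl l e b₁ b₂)
      ↔ ∃ ab ∈ l, x.1 ∈ sec ab.1 e b₁ ∧ x.2 ∈ sec ab.2 e b₂ := by
  simp only [unionProd, secl, Set.mem_setOf_eq, List.mem_map]
  constructor
  · rintro ⟨ab', ⟨ab, hab, rfl⟩, h1, h2⟩
    exact ⟨ab, hab, h1, h2⟩
  · rintro ⟨ab, hab, h1, h2⟩
    exact ⟨(sec ab.1 e b₁, sec ab.2 e b₂), ⟨ab, hab, rfl⟩, h1, h2⟩

lemma unionProd_dbl (l : List (Set (E → Bool) × Set (E → Bool))) (e : E) (b₁ : Bool) :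
    unionProd (dbl l e b₁) = unionProd (secl l e false b₁) ∪ unionProd (secl l e b₁ false) := by
  ext x
  rw [Set.mem_union, mem_unionProd_secl, mem_unionProd_secl]
  simp only [unionProd, dbl, Set.mem_setOf_eq, List.mem_flatMap, List.mem_cons,
    List.not_mem_nil, or_false]
  constructor
  · rintro ⟨ab', ⟨ab, hab, (rfl | rfl)⟩, h1, h2⟩
    · exact Or.inl ⟨ab, hab, h1, h2⟩
    · exact Or.inr ⟨ab, hab, h1, h2⟩
  · rintro (⟨ab, hab, h1, h2⟩ | ⟨ab, hab, h1, h2⟩)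
    · exact ⟨(sec ab.1 e false, sec ab.2 e b₁), ⟨ab, hab, Or.inl rfl⟩, h1, h2⟩
    · exact ⟨(sec ab.1 e b₁, sec ab.2 e false), ⟨ab, hab, Or.inr rfl⟩, h1, h2⟩

lemma unionProd_secl_subset {l : List (Set (E → Bool) × Set (E → Bool))}
    (hl : ∀ ab ∈ l, UpwardClosed ab.1 ∧ UpwardClosed ab.2) (e : E)
    {x y x' y' : Bool} (hx : x = false ∨ x = x') (hy : y = false ∨ y = y') :
    unionProd (secl l e x y) ⊆ unionProd (secl l e x' y') := by
  intro z hz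
  rw [mem_unionProd_secl] at hz ⊢
  obtain ⟨ab, hab, h1, h2⟩ := hz
  refine ⟨ab, hab, ?_, ?_⟩
  · rcases hx with rfl | rfl
    · exact sec_false_subset (hl ab hab).1 e x' h1
    · exact h1
  · rcases hy with rfl | rfl
    · exact sec_false_subset (hl ab hab).2 e y' h2
    · exact h2

lemma secl_upward {l : List (Set (E → Bool) × Set (E → Bool))}
    (hl : ∀ ab ∈ l, UpwardClosed ab.1 ∧ UpwardClosed ab.2) (e : E) (b₁ b₂ : Bool) :
    ∀ ab ∈ secl l e b₁ b₂, UpwardClosed ab.1 ∧ UpwardClosed ab.2 := by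
  intro ab' hab'
  obtain ⟨ab, hab, rfl⟩ := List.mem_map.1 hab'
  exact ⟨sec_upward (hl ab hab).1 e b₁, sec_upward (hl ab hab).2 e b₂⟩

lemma dbl_upward {l : List (Set (E → Bool) × Set (E → Bool))}
    (hl : ∀ ab ∈ l, UpwardClosed ab.1 ∧ UpwardClosed ab.2) (e : E) (b₁ : Bool) :
    ∀ ab ∈ dbl l e b₁, UpwardClosed ab.1 ∧ UpwardClosed ab.2 := by
  intro ab' hab'
  obtain ⟨ab, hab, hmem⟩ := List.mem_flatMap.1 hab'
  rcases List.mem_cons.1 hmem with rfl | hmem'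
  · exact ⟨sec_upward (hl ab hab).1 e false, sec_upward (hl ab hab).2 e b₁⟩
  · rcases List.mem_singleton.1 hmem' with rfl
    exact ⟨sec_upward (hl ab hab).1 e b₁, sec_upward (hl ab hab).2 e false⟩

lemma pin_unionBox_false {e : E} {child : Bool → Bool → PairTree E} {U : Finset E}
    (hch : ∀ b₁' b₂', (child b₁' b₂').valid (insert e U))
    (l : List (Set (E → Bool) × Set (E → Bool))) (b₁ b₂ : Bool) :
    pin (unionBox (PairTree.node e false child) l) e b₁ b₂
      = unionBox (child b₁ b₂) (secl l e b₁ b₂) := by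
  ext x
  simp only [pin, unionBox, secl, Set.mem_setOf_eq, List.mem_map]
  constructor
  · rintro ⟨ab, hab, hmem⟩
    refine ⟨(sec ab.1 e b₁, sec ab.2 e b₂), ⟨ab, hab, rfl⟩, ?_⟩
    rw [← pin_BoxS_node_false (U := U) hch ab.1 ab.2 b₁ b₂]
    exact hmem
  · rintro ⟨ab', ⟨ab, hab, rfl⟩, hmem⟩
    refine ⟨ab, hab, ?_⟩
    rw [← pin_BoxS_node_false (U := U) hch ab.1 ab.2 b₁ b₂] at hmem
    exact hmem

lemma pin_unionBox_true {e : E} {child : Bool → Bool → PairTree E} {U : Finset E}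
    (hch : ∀ b₁' b₂', (child b₁' b₂').valid (insert e U))
    {l : List (Set (E → Bool) × Set (E → Bool))}
    (hl : ∀ ab ∈ l, UpwardClosed ab.1 ∧ UpwardClosed ab.2) (b₁ b₂ : Bool) :
    pin (unionBox (PairTree.node e true child) l) e b₁ b₂
      = unionBox (child b₁ b₂) (dbl l e b₁) := by
  ext x
  simp only [pin, unionBox, dbl, Set.mem_setOf_eq, List.mem_flatMap, List.mem_cons,
    List.not_mem_nil, or_false]
  constructor
  · rintro ⟨ab, hab, hmem⟩
    have heq := pin_BoxS_node_true (U := U) hch (hl ab hab).1 (hl ab hab).2 b₁ b₂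
    have hx : x ∈ pin (BoxS (PairTree.node e true child) ab.1 ab.2) e b₁ b₂ := hmem
    rw [heq] at hx
    rcases hx with h | h
    · exact ⟨(sec ab.1 e false, sec ab.2 e b₁), ⟨ab, hab, Or.inl rfl⟩, h⟩
    · exact ⟨(sec ab.1 e b₁, sec ab.2 e false), ⟨ab, hab, Or.inr rfl⟩, h⟩
  · rintro ⟨ab', ⟨ab, hab, hab'⟩, hmem⟩
    refine ⟨ab, hab, ?_⟩
    have heq := pin_BoxS_node_true (U := U) hch (hl ab hab).1 (hl ab hab).2 b₁ b₂
    show x ∈ pin (BoxS (PairTree.node e true child) ab.1 ab.2) e b₁ b₂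
    rw [heq]
    rcases hab' with rfl | rfl
    · exact Or.inl hmem
    · exact Or.inr hmem

theorem main_ineq (p : E → ℝ) (hp : ∀ e, 0 ≤ p e ∧ p e ≤ 1) (T : PairTree E) :
    ∀ U : Finset E, T.valid U →
      ∀ l : List (Set (E → Bool) × Set (E → Bool)),
        (∀ ab ∈ l, UpwardClosed ab.1 ∧ UpwardClosed ab.2) →
        Pr2 p (unionBox T l) ≤ Pr2 p (unionProd l) := by
  induction T with
  | leaf =>
    intro U _ l _
    rw [unionBox_leaf]
  | node e toS child ih =>
    intro U hU l hl
    obtain ⟨heU, hch⟩ := hU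
    rw [Pr2_pin p e (unionBox _ l), Pr2_pin p e (unionProd l)]
    cases toS with
    | false =>
      refine Finset.sum_le_sum fun b₁ _ => Finset.sum_le_sum fun b₂ _ => ?_
      rw [pin_unionBox_false (U := U) hch l b₁ b₂, pin_unionProd l e b₁ b₂]
      exact mul_le_mul_of_nonneg_left
        (ih b₁ b₂ (insert e U) (hch b₁ b₂) _ (secl_upward hl e b₁ b₂))
        (mul_nonneg (wf_nonneg hp e b₁) (wf_nonneg hp e b₂))
    | true =>
      have step1 : ∑ b₁ : Bool, ∑ b₂ : Bool, wf p e b₁ * wf p e b₂ *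
            Pr2 p (pin (unionBox (PairTree.node e true child) l) e b₁ b₂)
          ≤ ∑ b₁ : Bool, ∑ b₂ : Bool, wf p e b₁ * wf p e b₂ *
            Pr2 p (unionProd (dbl l e b₁)) := by
        refine Finset.sum_le_sum fun b₁ _ => Finset.sum_le_sum fun b₂ _ => ?_
        rw [pin_unionBox_true (U := U) hch hl b₁ b₂]
        exact mul_le_mul_of_nonneg_left
          (ih b₁ b₂ (insert e U) (hch b₁ b₂) _ (dbl_upward hl e b₁))
          (mul_nonneg (wf_nonneg hp e b₁) (wf_nonneg hp e b₂))
      refine le_trans step1 ?_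
      have hflat0 : unionProd (dbl l e false) = unionProd (secl l e false false) := by
        rw [unionProd_dbl, Set.union_self]
      have hflat1 : unionProd (dbl l e true)
          = unionProd (secl l e false true) ∪ unionProd (secl l e true false) :=
        unionProd_dbl l e true
      have hsub1 : unionProd (secl l e false false)
          ⊆ unionProd (secl l e false true) ∩ unionProd (secl l e true false) :=
        Set.subset_inter
          (unionProd_secl_subset hl e (Or.inr rfl) (Or.inl rfl))
          (unionProd_secl_subset hl e (Or.inl rfl) (Or.inr rfl))
      have hsub2 : unionProd (secl l e false true) ∪ unionProd (secl l e true false)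
          ⊆ unionProd (secl l e true true) :=
        Set.union_subset
          (unionProd_secl_subset hl e (Or.inl rfl) (Or.inr rfl))
          (unionProd_secl_subset hl e (Or.inr rfl) (Or.inl rfl))
      have hui := Pr2_union_inter p (unionProd (secl l e false true))
        (unionProd (secl l e true false))
      have hm1 := Pr2_mono hp hsub1
      have hm2 := Pr2_mono hp hsub2
      simp only [Fintype.sum_bool, pin_unionProd l e, hflat0, hflat1]
      have ha : 0 ≤ wf p e true := wf_nonneg hp e true
      have hc : 0 ≤ wf p e false := wf_nonneg hp e false
      have h3 : Pr2 p (unionProd (secl l e false true) ∪ unionProd (secl l e true false))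
          ≤ Pr2 p (unionProd (secl l e false true)) + Pr2 p (unionProd (secl l e true false))
            - Pr2 p (unionProd (secl l e false false)) := by linarith
      have h4 := hm2
      nlinarith [mul_le_mul_of_nonneg_left h4 (mul_nonneg ha ha),
        mul_le_mul_of_nonneg_left h3 (mul_nonneg ha hc),
        mul_le_mul_of_nonneg_left h3 (mul_nonneg hc ha)]

/-- Decision tree van den Berg–Kesten inequality. -/
theorem decision_tree_vdBK
    {V : Type*} [Fintype V] [DecidableEq V] (G : SimpleGraph V) [DecidableRel G.Adj]
    (p : G.edgeSet → ℝ) (hp : ∀ e, 0 ≤ p e ∧ p e ≤ 1)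
    (T : PairTree G.edgeSet) (hT : T.valid ∅)
    (A B : Set (G.edgeSet → Bool)) (hA : UpwardClosed A) (hB : UpwardClosed B) :
    Pr2 p (BoxS T A B) ≤ Pr p A * Pr p B := by
  have h := main_ineq p hp T ∅ hT [(A, B)] (by
    intro ab hab
    rcases List.mem_singleton.1 hab with rfl
    exact ⟨hA, hB⟩)
  have h1 : unionBox T [(A, B)] = BoxS T A B := by
    ext x
    simp [unionBox]
  have h2 : unionProd [(A, B)] = A ×ˢ B := by
    ext x
    simp [unionProd, Set.mem_prod]
  rw [h1, h2, Pr2_prod] at h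
  exact h

end DTPerc
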